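/- For n ≥ 2 and any admissible peak set S (i.e., P(S;n) is nonempty), the minimum Hamming distance between distinct permutations in P(S;n) is 2, the minimum ℓ∞ distance is 1, and the minimum Kendall-Tau distance is 1. -/
import Mathlib

/-- Hamming distance on permutations of `Fin n`. -/
def dH (n : ℕ) (σ ρ : Equiv.Perm (Fin n)) : ℕ :=
  (Finset.univ.filter (fun i => σ i ≠ ρ i)).card

/-- ℓ∞ distance on permutations of `Fin n`. -/
def dL (n : ℕ) (σ ρ : Equiv.Perm (Fin n)) : ℕ :=
  Finset.univ.sup (fun i => (((σ i : ℕ) : ℤ) - ((ρ i : ℕ) : ℤ)).natAbs)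

/-- Kendall-Tau distance: number of deranged pairs. -/
def dK (n : ℕ) (σ ρ : Equiv.Perm (Fin n)) : ℕ :=
  (Finset.univ.filter (fun p : Fin n × Fin n =>
    p.1 < p.2 ∧ (((σ p.1 : ℕ) : ℤ) - ((σ p.2 : ℕ) : ℤ)) *
      (((ρ p.1 : ℕ) : ℤ) - ((ρ p.2 : ℕ) : ℤ)) < 0)).card

/-- `τ` is an adjacent transposition `(i, i+1)`. -/
def IsAdjTrans (n : ℕ) (τ : Equiv.Perm (Fin n)) : Prop :=
  ∃ (i : ℕ) (h : i + 1 < n), τ = Equiv.swap ⟨i, Nat.lt_of_succ_lt h⟩ ⟨i + 1, h⟩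

/-- Minimal number of adjacent transpositions transforming `σ` into `ρ`
(acting by left multiplication). -/
noncomputable def dK' (n : ℕ) (σ ρ : Equiv.Perm (Fin n)) : ℕ :=
  sInf {m | ∃ L : List (Equiv.Perm (Fin n)), L.length = m ∧
    (∀ τ ∈ L, IsAdjTrans n τ) ∧ L.prod * σ = ρ}

/-- The peak set of `σ`, with 1-based positions: `j ∈ {2, …, n-1}` is a peak if
`σ_{j-1} < σ_j > σ_{j+1}` in one-line notation (so 0-based indices `j-2, j-1, j`). -/
def peaks (n : ℕ) (σ : Equiv.Perm (Fin n)) : Finset ℕ :=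
  (Finset.Icc 2 (n - 1)).filter (fun j =>
    ∃ (h1 : j - 2 < n) (h2 : j - 1 < n) (h3 : j < n),
      σ ⟨j - 2, h1⟩ < σ ⟨j - 1, h2⟩ ∧ σ ⟨j, h3⟩ < σ ⟨j - 1, h2⟩)


section Aux

variable {n : ℕ}

lemma dH_aux_ge_two (σ ρ : Equiv.Perm (Fin n)) (h : σ ≠ ρ) :
    2 ≤ (Finset.univ.filter (fun i => σ i ≠ ρ i)).card := by
  classical
  set s := Finset.univ.filter (fun i => σ i ≠ ρ i) with hs
  have hne : s.Nonempty := by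
    rcases (not_forall.1 (fun hall => h (Equiv.ext hall))) with ⟨i, hi⟩
    exact ⟨i, by simp [hs, hi]⟩
  rcases Nat.lt_or_ge s.card 2 with hlt | hge
  · exfalso
    have h1 : s.card = 1 := by
      have := Finset.card_pos.2 hne; omega
    obtain ⟨i, hi⟩ := Finset.card_eq_one.1 h1
    have hiS : σ i ≠ ρ i := by
      have : i ∈ s := by rw [hi]; exact Finset.mem_singleton_self i
      simpa [hs] using this
    have hagree : ∀ j, j ≠ i → σ j = ρ j := by
      intro j hj
      by_contra hcon
      have : j ∈ s := by simp [hs, hcon]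
      rw [hi, Finset.mem_singleton] at this
      exact hj this
    set j := ρ.symm (σ i) with hj
    have hρj : ρ j = σ i := ρ.apply_symm_apply _
    by_cases hji : j = i
    · rw [hji] at hρj; exact hiS hρj.symm
    · have : σ j = σ i := by rw [← hρj]; exact hagree j hji
      exact hji (σ.injective this)
  · exact hge

lemma dL_aux_ge_one (σ ρ : Equiv.Perm (Fin n)) (h : σ ≠ ρ) :
    1 ≤ Finset.univ.sup (fun i => (((σ i : ℕ) : ℤ) - ((ρ i : ℕ) : ℤ)).natAbs) := by
  rcases (not_forall.1 (fun hall => h (Equiv.ext hall))) with ⟨i, hi⟩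
  have hsub : (((σ i : ℕ) : ℤ) - ((ρ i : ℕ) : ℤ)) ≠ 0 := by
    intro hz
    apply hi
    have : ((σ i : ℕ) : ℤ) = ((ρ i : ℕ) : ℤ) := by linarith [sub_eq_zero.1 hz]
    exact Fin.ext (by exact_mod_cast this)
  have : 1 ≤ (((σ i : ℕ) : ℤ) - ((ρ i : ℕ) : ℤ)).natAbs := by
    have := Int.natAbs_pos.2 hsub; omega
  exact le_trans this (Finset.le_sup (f := fun i => (((σ i : ℕ) : ℤ) - ((ρ i : ℕ) : ℤ)).natAbs) (Finset.mem_univ i))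

lemma dK_aux_ge_one (σ ρ : Equiv.Perm (Fin n)) (h : σ ≠ ρ) :
    1 ≤ (Finset.univ.filter (fun p : Fin n × Fin n =>
      p.1 < p.2 ∧ (((σ p.1 : ℕ) : ℤ) - ((σ p.2 : ℕ) : ℤ)) *
        (((ρ p.1 : ℕ) : ℤ) - ((ρ p.2 : ℕ) : ℤ)) < 0)).card := by
  classical
  by_contra hcon
  push_neg at hcon
  have hempty : ∀ p : Fin n × Fin n, ¬ (p.1 < p.2 ∧
      (((σ p.1 : ℕ) : ℤ) - ((σ p.2 : ℕ) : ℤ)) *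
        (((ρ p.1 : ℕ) : ℤ) - ((ρ p.2 : ℕ) : ℤ)) < 0) := by
    intro p hp
    have : p ∈ Finset.univ.filter (fun p : Fin n × Fin n =>
      p.1 < p.2 ∧ (((σ p.1 : ℕ) : ℤ) - ((σ p.2 : ℕ) : ℤ)) *
        (((ρ p.1 : ℕ) : ℤ) - ((ρ p.2 : ℕ) : ℤ)) < 0) := by simp [hp.1, hp.2]
    have := Finset.card_pos.2 ⟨p, this⟩
    omega
  -- no discordant pair ⇒ same relative order ⇒ σ = ρ
  have key : ∀ i j : Fin n, i ≠ j → ρ i < ρ j → σ i < σ j := by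
    intro i j hij hρ
    rcases lt_trichotomy (σ i) (σ j) with hlt | heq | hgt
    · exact hlt
    · exact absurd (σ.injective heq) hij
    · exfalso
      have hσ : ((σ j : ℕ) : ℤ) < ((σ i : ℕ) : ℤ) := by exact_mod_cast hgt
      have hρ' : ((ρ i : ℕ) : ℤ) < ((ρ j : ℕ) : ℤ) := by exact_mod_cast hρ
      rcases lt_or_gt_of_ne hij with hij' | hij'
      · exact hempty (i, j) ⟨hij', by nlinarith⟩
      · exact hempty (j, i) ⟨hij', by nlinarith⟩
  set f : Fin n → Fin n := fun k => σ (ρ.symm k) with hf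
  have hmono : StrictMono f := by
    intro k l hkl
    apply key
    · intro e; exact absurd (ρ.symm.injective e) hkl.ne
    · simpa using hkl
  have hrange : Set.range f = Set.range (id : Fin n → Fin n) := by
    rw [Set.range_id]
    exact (ρ.symm.trans σ).surjective.range_eq
  have hfid : f = id := by
    have := @StrictMono.range_inj (Fin n) (Fin n) _ _ (inferInstance : WellFoundedLT (Fin n)) f id hmono strictMono_id
    exact this.1 hrange
  apply h
  apply Equiv.ext
  intro i
  have := congrFun hfid (ρ i)
  simpa [hf] using this

lemma swap01_lt (z o : Fin n) (hz : (z : ℕ) = 0) (ho : (o : ℕ) = 1)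
    (a c : Fin n) (hc : 2 ≤ (c : ℕ)) (h : a < c) :
    Equiv.swap z o a < Equiv.swap z o c := by
  have hcz : c ≠ z := by intro e; rw [e, hz] at hc; omega
  have hco : c ≠ o := by intro e; rw [e, ho] at hc; omega
  rw [Equiv.swap_apply_of_ne_of_ne hcz hco]
  by_cases haz : a = z
  · rw [haz, Equiv.swap_apply_left, Fin.lt_def, ho]; omega
  · by_cases hao : a = o
    · rw [hao, Equiv.swap_apply_right, Fin.lt_def, hz]; omega
    · rw [Equiv.swap_apply_of_ne_of_ne haz hao]; exact h

lemma peaks_swap_subset (z o : Fin n) (hz : (z : ℕ) = 0) (ho : (o : ℕ) = 1)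
    (σ : Equiv.Perm (Fin n)) :
    peaks n σ ⊆ peaks n (Equiv.swap z o * σ) := by
  intro j hj
  rw [peaks, Finset.mem_filter] at hj ⊢
  obtain ⟨hIcc, h1, h2, h3, hlt1, hlt2⟩ := hj
  have hj2 : 2 ≤ j := (Finset.mem_Icc.1 hIcc).1
  refine ⟨hIcc, h1, h2, h3, ?_, ?_⟩
  · have hdist : σ ⟨j - 2, h1⟩ ≠ σ ⟨j, h3⟩ := by
      intro e
      have := σ.injective e
      have : j - 2 = j := congrArg Fin.val this
      omega
    have hc : 2 ≤ ((σ ⟨j - 1, h2⟩ : Fin n) : ℕ) := by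
      have v1 : ((σ ⟨j - 2, h1⟩ : Fin n) : ℕ) < ((σ ⟨j - 1, h2⟩ : Fin n) : ℕ) := hlt1
      have v2 : ((σ ⟨j, h3⟩ : Fin n) : ℕ) < ((σ ⟨j - 1, h2⟩ : Fin n) : ℕ) := hlt2
      have v3 : ((σ ⟨j - 2, h1⟩ : Fin n) : ℕ) ≠ ((σ ⟨j, h3⟩ : Fin n) : ℕ) :=
        fun e => hdist (Fin.ext e)
      omega
    exact swap01_lt z o hz ho _ _ hc hlt1
  · have hdist : σ ⟨j - 2, h1⟩ ≠ σ ⟨j, h3⟩ := by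
      intro e
      have := σ.injective e
      have : j - 2 = j := congrArg Fin.val this
      omega
    have hc : 2 ≤ ((σ ⟨j - 1, h2⟩ : Fin n) : ℕ) := by
      have v1 : ((σ ⟨j - 2, h1⟩ : Fin n) : ℕ) < ((σ ⟨j - 1, h2⟩ : Fin n) : ℕ) := hlt1
      have v2 : ((σ ⟨j, h3⟩ : Fin n) : ℕ) < ((σ ⟨j - 1, h2⟩ : Fin n) : ℕ) := hlt2
      have v3 : ((σ ⟨j - 2, h1⟩ : Fin n) : ℕ) ≠ ((σ ⟨j, h3⟩ : Fin n) : ℕ) :=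
        fun e => hdist (Fin.ext e)
      omega
    exact swap01_lt z o hz ho _ _ hc hlt2

lemma peaks_swap_eq (z o : Fin n) (hz : (z : ℕ) = 0) (ho : (o : ℕ) = 1)
    (σ : Equiv.Perm (Fin n)) :
    peaks n (Equiv.swap z o * σ) = peaks n σ := by
  apply Finset.Subset.antisymm
  · have := peaks_swap_subset z o hz ho (Equiv.swap z o * σ)
    rwa [← mul_assoc, Equiv.swap_mul_self, one_mul] at this
  · exact peaks_swap_subset z o hz ho σ


lemma swap01_sign {n : ℕ} (z o : Fin n) (hz : (z : ℕ) = 0) (ho : (o : ℕ) = 1)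
    (x y : Fin n) (hxy : x ≠ y) :
    (((x : ℕ) : ℤ) - ((y : ℕ) : ℤ)) *
      (((Equiv.swap z o x : Fin n) : ℕ) - ((Equiv.swap z o y : Fin n) : ℕ) : ℤ) < 0 ↔
    ((x = z ∧ y = o) ∨ (x = o ∧ y = z)) := by
  have hzo : z ≠ o := by intro e; rw [e, ho] at hz; omega
  by_cases hx1 : x = z
  · rw [hx1, Equiv.swap_apply_left]
    by_cases hy1 : y = z
    · exact absurd (hx1.trans hy1.symm) hxy
    · by_cases hy2 : y = o
      · rw [hy2, Equiv.swap_apply_right]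
        refine iff_of_true ?_ (Or.inl ⟨rfl, rfl⟩)
        rw [hz, ho]; norm_num
      · rw [Equiv.swap_apply_of_ne_of_ne hy1 hy2]
        have hyv : 2 ≤ (y : ℕ) := by
          have h1 : (y : ℕ) ≠ 0 := fun e => hy1 (Fin.ext (by rw [e, hz]))
          have h2 : (y : ℕ) ≠ 1 := fun e => hy2 (Fin.ext (by rw [e, ho]))
          omega
        refine iff_of_false ?_ ?_
        · intro hlt
          rw [hz, ho] at hlt
          push_cast at hlt
          have : (2 : ℤ) ≤ ((y : ℕ) : ℤ) := by exact_mod_cast hyv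
          nlinarith
        · rintro (⟨_, h⟩ | ⟨h, _⟩)
          · exact absurd h hy2
          · exact absurd h hzo
  · by_cases hx2 : x = o
    · rw [hx2, Equiv.swap_apply_right]
      by_cases hy1 : y = z
      · rw [hy1, Equiv.swap_apply_left]
        refine iff_of_true ?_ (Or.inr ⟨rfl, rfl⟩)
        rw [hz, ho]; norm_num
      · by_cases hy2 : y = o
        · exact absurd (hx2.trans hy2.symm) hxy
        · rw [Equiv.swap_apply_of_ne_of_ne hy1 hy2]
          have hyv : 2 ≤ (y : ℕ) := by
            have h1 : (y : ℕ) ≠ 0 := fun e => hy1 (Fin.ext (by rw [e, hz]))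
            have h2 : (y : ℕ) ≠ 1 := fun e => hy2 (Fin.ext (by rw [e, ho]))
            omega
          refine iff_of_false ?_ ?_
          · intro hlt
            rw [hz, ho] at hlt
            push_cast at hlt
            have : (2 : ℤ) ≤ ((y : ℕ) : ℤ) := by exact_mod_cast hyv
            nlinarith
          · rintro (⟨h, _⟩ | ⟨_, h⟩)
            · exact absurd h.symm hzo
            · exact absurd h hy1
    · rw [Equiv.swap_apply_of_ne_of_ne hx1 hx2]
      have hxv : 2 ≤ (x : ℕ) := by
        have h1 : (x : ℕ) ≠ 0 := fun e => hx1 (Fin.ext (by rw [e, hz]))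
        have h2 : (x : ℕ) ≠ 1 := fun e => hx2 (Fin.ext (by rw [e, ho]))
        omega
      have hx2' : (2 : ℤ) ≤ ((x : ℕ) : ℤ) := by exact_mod_cast hxv
      refine iff_of_false ?_ ?_
      · intro hlt
        by_cases hy1 : y = z
        · rw [hy1, Equiv.swap_apply_left, hz, ho] at hlt
          push_cast at hlt
          nlinarith
        · by_cases hy2 : y = o
          · rw [hy2, Equiv.swap_apply_right, hz, ho] at hlt
            push_cast at hlt
            nlinarith
          · rw [Equiv.swap_apply_of_ne_of_ne hy1 hy2] at hlt
            nlinarith [mul_self_nonneg (((x : ℕ) : ℤ) - ((y : ℕ) : ℤ))]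
      · rintro (⟨h, _⟩ | ⟨h, _⟩)
        · exact absurd h hx1
        · exact absurd h hx2

end Aux

/-- for an admissible peak set `S`, the minimum Hamming, ℓ∞ and
Kendall-Tau distances between distinct permutations in `P(S;n)` are 2, 1, 1. -/
theorem min_distances_on_peak_class (n : ℕ) (hn : 2 ≤ n) (S : Finset ℕ)
    (hS : ∃ σ : Equiv.Perm (Fin n), peaks n σ = S) :
    IsLeast {d | ∃ σ ρ : Equiv.Perm (Fin n),
      peaks n σ = S ∧ peaks n ρ = S ∧ σ ≠ ρ ∧ d = dH n σ ρ} 2 ∧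
    IsLeast {d | ∃ σ ρ : Equiv.Perm (Fin n),
      peaks n σ = S ∧ peaks n ρ = S ∧ σ ≠ ρ ∧ d = dL n σ ρ} 1 ∧
    IsLeast {d | ∃ σ ρ : Equiv.Perm (Fin n),
      peaks n σ = S ∧ peaks n ρ = S ∧ σ ≠ ρ ∧ d = dK n σ ρ} 1 := by
  classical
  obtain ⟨σ, hσ⟩ := hS
  have h0 : 0 < n := by omega
  have h1 : 1 < n := by omega
  set z : Fin n := ⟨0, h0⟩ with hzdef
  set o : Fin n := ⟨1, h1⟩ with hodef
  have hz : (z : ℕ) = 0 := rfl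
  have ho : (o : ℕ) = 1 := rfl
  have hzo : z ≠ o := by
    intro e; have := congrArg Fin.val e; rw [hz, ho] at this; omega
  set ρ : Equiv.Perm (Fin n) := Equiv.swap z o * σ with hρdef
  have hρapp : ∀ i, ρ i = Equiv.swap z o (σ i) := fun i => rfl
  have hpeaks : peaks n ρ = S := by rw [hρdef, peaks_swap_eq z o hz ho, hσ]
  set a : Fin n := σ.symm z with hadef
  set b : Fin n := σ.symm o with hbdef
  have hσa : σ a = z := σ.apply_symm_apply z
  have hσb : σ b = o := σ.apply_symm_apply o
  have hab : a ≠ b := fun e => hzo (by rw [← hσa, ← hσb, e])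
  have hne : σ ≠ ρ := by
    intro e
    have : σ a = ρ a := by rw [← e]
    rw [hσa, hρapp, hσa, Equiv.swap_apply_left] at this
    exact hzo this
  -- characterization of where σ and ρ differ
  have hdiff : ∀ i, σ i ≠ ρ i ↔ (σ i = z ∨ σ i = o) := by
    intro i
    rw [hρapp]
    constructor
    · intro h
      by_contra hcon
      push_neg at hcon
      exact h (Equiv.swap_apply_of_ne_of_ne hcon.1 hcon.2).symm
    · rintro (h | h) <;> rw [h]
      · rw [Equiv.swap_apply_left]; exact hzo
      · rw [Equiv.swap_apply_right]; exact fun e => hzo e.symm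
  have hmem : ∀ i, σ i = z ∨ σ i = o ↔ i = a ∨ i = b := by
    intro i
    constructor
    · rintro (h | h)
      · left; rw [hadef, ← h, Equiv.symm_apply_apply]
      · right; rw [hbdef, ← h, Equiv.symm_apply_apply]
    · rintro (h | h)
      · left; rw [h, hσa]
      · right; rw [h, hσb]
  -- dH = 2
  have hdH : dH n σ ρ = 2 := by
    have hfil : Finset.univ.filter (fun i => σ i ≠ ρ i) = {a, b} := by
      ext i
      simp only [Finset.mem_filter, Finset.mem_univ, true_and, Finset.mem_insert,
        Finset.mem_singleton]
      rw [hdiff i, hmem i]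
    rw [dH, hfil, Finset.card_pair hab]
  -- dL = 1
  have hdL : dL n σ ρ = 1 := by
    apply le_antisymm
    · rw [dL]
      apply Finset.sup_le
      intro i _
      rcases (em (σ i = z)) with h | h
      · have : ρ i = o := by rw [hρapp, h, Equiv.swap_apply_left]
        rw [h, this, hz, ho]
        norm_num
      · rcases (em (σ i = o)) with h2 | h2
        · have : ρ i = z := by rw [hρapp, h2, Equiv.swap_apply_right]
          rw [h2, this, hz, ho]
          norm_num
        · have : ρ i = σ i := by rw [hρapp, Equiv.swap_apply_of_ne_of_ne h h2]
          rw [this]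
          simp
    · exact dL_aux_ge_one σ ρ hne
  -- dK = 1
  have hdK : dK n σ ρ = 1 := by
    set q : Fin n × Fin n := if a < b then (a, b) else (b, a) with hq
    have hfil : Finset.univ.filter (fun p : Fin n × Fin n =>
        p.1 < p.2 ∧ (((σ p.1 : ℕ) : ℤ) - ((σ p.2 : ℕ) : ℤ)) *
          (((ρ p.1 : ℕ) : ℤ) - ((ρ p.2 : ℕ) : ℤ)) < 0) = {q} := by
      ext p
      simp only [Finset.mem_filter, Finset.mem_univ, true_and, Finset.mem_singleton]
      constructor
      · rintro ⟨hplt, hsign⟩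
        have hpne : σ p.1 ≠ σ p.2 := fun e => hplt.ne (σ.injective e)
        rw [hρapp, hρapp] at hsign
        rw [swap01_sign z o hz ho _ _ hpne] at hsign
        rcases hsign with ⟨e1, e2⟩ | ⟨e1, e2⟩
        · have hp1 : p.1 = a := by rw [hadef, ← e1, Equiv.symm_apply_apply]
          have hp2 : p.2 = b := by rw [hbdef, ← e2, Equiv.symm_apply_apply]
          have : a < b := by rw [← hp1, ← hp2]; exact hplt
          rw [hq, if_pos this]
          exact Prod.ext hp1 hp2
        · have hp1 : p.1 = b := by rw [hbdef, ← e1, Equiv.symm_apply_apply]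
          have hp2 : p.2 = a := by rw [hadef, ← e2, Equiv.symm_apply_apply]
          have hba : b < a := by rw [← hp1, ← hp2]; exact hplt
          rw [hq, if_neg (asymm hba)]
          exact Prod.ext hp1 hp2
      · intro hpq
        rw [hq] at hpq
        by_cases hab' : a < b
        · rw [if_pos hab'] at hpq
          subst hpq
          refine ⟨hab', ?_⟩
          rw [hρapp, hρapp]
          rw [swap01_sign z o hz ho _ _ (fun e => hab (σ.injective e))]
          exact Or.inl ⟨hσa, hσb⟩
        · rw [if_neg hab'] at hpq
          subst hpq
          have hba : b < a := lt_of_le_of_ne (not_lt.1 hab') (fun e => hab e.symm)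
          refine ⟨hba, ?_⟩
          rw [hρapp, hρapp]
          rw [swap01_sign z o hz ho _ _ (fun e => hab (σ.injective e.symm))]
          exact Or.inr ⟨hσb, hσa⟩
    rw [dK, hfil, Finset.card_singleton]
  refine ⟨⟨⟨σ, ρ, hσ, hpeaks, hne, hdH.symm⟩, ?_⟩,
    ⟨⟨σ, ρ, hσ, hpeaks, hne, hdL.symm⟩, ?_⟩,
    ⟨⟨σ, ρ, hσ, hpeaks, hne, hdK.symm⟩, ?_⟩⟩
  · rintro d ⟨σ', ρ', -, -, hne', rfl⟩
    exact dH_aux_ge_two σ' ρ' hne'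
  · rintro d ⟨σ', ρ', -, -, hne', rfl⟩
    exact dL_aux_ge_one σ' ρ' hne'
  · rintro d ⟨σ', ρ', -, -, hne', rfl⟩
    exact dK_aux_ge_one σ' ρ' hne'
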